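/- Let {S_i}_{i∈I} be a finite family of communicating systems over pairwise disjoint participant sets, let H = {h_i}_{i∈I} be a set of interfaces for it (no condition on mixed states), let CM be a connection model for H, and let K be a connection policy for H complying with CM. If every S_i (i ∈ I) is orphan-message free and K is orphan-message free, then the multicomposition MC({S_i}_{i∈I}, K) is orphan-message free. -/

import Mathlib

namespace CFSM

/-- Direction of a communication action: output (`!`) or input (`?`). -/
inductive Dir : Type where
  | out : Dir
  | inp : Dir
deriving DecidableEq

instance : Fintype Dir :=
  ⟨{Dir.out, Dir.inp}, fun x => by cases x <;> simp⟩

/-- An action `pq!a` (output) or `pq?a` (input) over participants `P` and messages `A`: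
`snd` is the sender `p`, `rcv` the receiver `q`, `msg` the message `a`. -/
structure Act (P : Type) (A : Type) : Type where
  snd : P
  rcv : P
  dir : Dir
  msg : A

instance {P A : Type} [Finite P] [Finite A] : Finite (Act P A) :=
  Finite.of_injective (fun l => (l.snd, l.rcv, l.dir, l.msg))
    (fun a b h => by
      cases a; cases b
      simp only [Prod.mk.injEq] at h
      obtain ⟨h1, h2, h3, h4⟩ := h
      subst h1; subst h2; subst h3; subst h4; rfl)

/-- The subject of an action: the sender of an output, the receiver of an input. -/
def Act.subject {P A : Type} (l : Act P A) : P :=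
  match l.dir with
  | .out => l.snd
  | .inp => l.rcv

/-- A communicating system over participants `P` and messages `A`:
one machine (state type, initial state and transition relation) per participant. -/
structure CS (P : Type) (A : Type) : Type 1 where
  St : P → Type
  init : ∀ p, St p
  delta : ∀ p, Set (St p × Act P A × St p)

/-- All actions of the machine of participant `p` have subject `p`
(the name of the machine) and distinct endpoints. -/
def CS.WellFormed {P A : Type} (S : CS P A) : Prop :=
  ∀ p t, t ∈ S.delta p → ((t.2.1 : Act P A).subject = p ∧ t.2.1.snd ≠ t.2.1.rcv)

/-- A configuration: a local state for each machine and a FIFO buffer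
for each ordered pair of participants. -/
structure Config {P A : Type} (S : CS P A) : Type where
  st : ∀ p, S.St p
  ch : P → P → List A

/-- The initial configuration: all machines in their initial state, all channels empty. -/
def CS.initConfig {P A : Type} (S : CS P A) : Config S :=
  ⟨S.init, fun _ _ => []⟩

/-- The labelled transition relation between configurations. -/
def StepL {P A : Type} (S : CS P A) (c : Config S) (l : Act P A) (c' : Config S) : Prop :=
  match l.dir with
  | .out =>
      (c.st l.snd, l, c'.st l.snd) ∈ S.delta l.snd ∧
      (∀ p, p ≠ l.snd → c'.st p = c.st p) ∧
      c'.ch l.snd l.rcv = c.ch l.snd l.rcv ++ [l.msg] ∧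
      (∀ p q, (p, q) ≠ (l.snd, l.rcv) → c'.ch p q = c.ch p q)
  | .inp =>
      (c.st l.rcv, l, c'.st l.rcv) ∈ S.delta l.rcv ∧
      (∀ p, p ≠ l.rcv → c'.st p = c.st p) ∧
      c.ch l.snd l.rcv = l.msg :: c'.ch l.snd l.rcv ∧
      (∀ p q, (p, q) ≠ (l.snd, l.rcv) → c'.ch p q = c.ch p q)

/-- Unlabelled transition relation. -/
def Step {P A : Type} (S : CS P A) (c c' : Config S) : Prop :=
  ∃ l, StepL S c l c'

/-- Reachability between configurations. -/
def Reach {P A : Type} (S : CS P A) : Config S → Config S → Prop :=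
  Relation.ReflTransGen (Step S)

/-- The set of configurations reachable from the initial configuration. -/
def RC {P A : Type} (S : CS P A) : Set (Config S) :=
  {c | Reach S S.initConfig c}

/-- A local state is final if it has no outgoing transition. -/
def FinalSt {Q P A : Type} (δ : Set (Q × Act P A × Q)) (q : Q) : Prop :=
  ∀ l q', (q, l, q') ∉ δ

/-- A local state is receiving if it is not final and all its outgoing
transitions are labelled with input actions. -/
def ReceivingSt {Q P A : Type} (δ : Set (Q × Act P A × Q)) (q : Q) : Prop :=
  (∃ l q', (q, l, q') ∈ δ) ∧ ∀ l q', (q, l, q') ∈ δ → (l : Act P A).dir = Dir.inp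

/-- A local state is mixed if it has at least one outgoing output-labelled
transition and at least one outgoing input-labelled transition. -/
def MixedSt {Q P A : Type} (δ : Set (Q × Act P A × Q)) (q : Q) : Prop :=
  (∃ l q', (q, l, q') ∈ δ ∧ (l : Act P A).dir = Dir.out) ∧
  (∃ l q', (q, l, q') ∈ δ ∧ (l : Act P A).dir = Dir.inp)

/-- A machine has no mixed states. -/
def NoMixed {Q P A : Type} (δ : Set (Q × Act P A × Q)) : Prop :=
  ∀ q, ¬ MixedSt δ q

/-- Deadlock configuration: all channels empty but all machines in receiving states. -/
def DeadlockConfig {P A : Type} (S : CS P A) (c : Config S) : Prop :=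
  (∀ p q, c.ch p q = []) ∧ ∀ p, ReceivingSt (S.delta p) (c.st p)

def DeadlockFree {P A : Type} (S : CS P A) : Prop :=
  ∀ c ∈ RC S, ¬ DeadlockConfig S c

/-- Orphan-message configuration: all machines final but some channel nonempty. -/
def OrphanConfig {P A : Type} (S : CS P A) (c : Config S) : Prop :=
  (∀ p, FinalSt (S.delta p) (c.st p)) ∧ ∃ p q, c.ch p q ≠ []

def OrphanFree {P A : Type} (S : CS P A) : Prop :=
  ∀ c ∈ RC S, ¬ OrphanConfig S c

/-- Unspecified reception configuration: some machine `r` is in a receiving state and,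
for every input transition of `r`, the corresponding channel is nonempty with a
first element different from the expected message. -/
def URConfig {P A : Type} (S : CS P A) (c : Config S) : Prop :=
  ∃ r, ReceivingSt (S.delta r) (c.st r) ∧
    ∀ s a q', (c.st r, Act.mk s r Dir.inp a, q') ∈ S.delta r →
      (c.ch s r ≠ [] ∧ ¬ ∃ w, c.ch s r = a :: w)

def ReceptionErrorFree {P A : Type} (S : CS P A) : Prop :=
  ∀ c ∈ RC S, ¬ URConfig S c

/-- Progress: every reachable configuration has an outgoing transition or all
machines are in final states. -/
def ProgressProp {P A : Type} (S : CS P A) : Prop :=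
  ∀ c ∈ RC S, (∃ c', Step S c c') ∨ ∀ p, FinalSt (S.delta p) (c.st p)

/-- `p`-lock configuration: `p` is in a receiving state and never occurs as the
subject of an action in any transition sequence from `c`. -/
def PLockConfig {P A : Type} (S : CS P A) (c : Config S) (p : P) : Prop :=
  ReceivingSt (S.delta p) (c.st p) ∧
  ∀ c1 l c2, Reach S c c1 → StepL S c1 l c2 → l.subject ≠ p

def LockFree {P A : Type} (S : CS P A) : Prop :=
  ∀ c ∈ RC S, ∀ p, ¬ PLockConfig S c p

section Composition

variable {I : Type} {P : I → Type} {A : Type}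

/-- Messages occurring in input actions of the machine of `p`. -/
def inMsgs {Pp A : Type} (S : CS Pp A) (p : Pp) : Set A :=
  {a | ∃ q s q', (q, Act.mk s p Dir.inp a, q') ∈ S.delta p}

/-- Messages occurring in output actions of the machine of `p`. -/
def outMsgs {Pp A : Type} (S : CS Pp A) (p : Pp) : Set A :=
  {a | ∃ q r q', (q, Act.mk p r Dir.out a, q') ∈ S.delta p}

/-- `CM` is a connection model for the interfaces `hh i` of the family `S`
(the interface `h_i` is represented by its index `i`). -/
def IsConnModel (S : ∀ i, CS (P i) A) (hh : ∀ i, P i) (CM : Set (I × A × I)) : Prop :=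
  ∀ i a,
    (a ∈ inMsgs (S i) (hh i) →
      ∃ j, j ≠ i ∧ a ∈ outMsgs (S j) (hh j) ∧ (i, a, j) ∈ CM) ∧
    (a ∈ outMsgs (S i) (hh i) →
      ∃ j, j ≠ i ∧ a ∈ inMsgs (S j) (hh j) ∧ (j, a, i) ∈ CM)

/-- `CM` is a strong connection model: additionally the connecting partner is unique. -/
def IsStrongConnModel (S : ∀ i, CS (P i) A) (hh : ∀ i, P i) (CM : Set (I × A × I)) : Prop :=
  IsConnModel S hh CM ∧
  ∀ i a,
    (a ∈ inMsgs (S i) (hh i) → ∃! j, (i, a, j) ∈ CM) ∧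
    (a ∈ outMsgs (S i) (hh i) → ∃! j, (j, a, i) ∈ CM)

/-- Conditions (*) and (**) for a candidate transition relation `d` of the local
connection policy of interface `hh i` (the name `k_i` is represented by `i`). -/
def PolicySat (S : ∀ i, CS (P i) A) (hh : ∀ i, P i) (CM : Set (I × A × I)) (i : I)
    (d : Set ((S i).St (hh i) × Act I A × (S i).St (hh i))) : Prop :=
  (∀ q r a q', (q, Act.mk r (hh i) Dir.inp a, q') ∈ (S i).delta (hh i) →
      ∃ j, j ≠ i ∧ (i, a, j) ∈ CM ∧ (q, Act.mk i j Dir.out a, q') ∈ d) ∧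
  (∀ q r a q', (q, Act.mk (hh i) r Dir.out a, q') ∈ (S i).delta (hh i) →
      ∃ j, j ≠ i ∧ (j, a, i) ∈ CM ∧ (q, Act.mk j i Dir.inp a, q') ∈ d)

/-- `d` belongs to the local connection policy set `IS(M_{h_i}, CM)`:
it is a minimal relation satisfying (*) and (**).  (The states `q̇` of the
policy machine are identified with the states `q` of `M_{h_i}`.) -/
def InIS (S : ∀ i, CS (P i) A) (hh : ∀ i, P i) (CM : Set (I × A × I)) (i : I)
    (d : Set ((S i).St (hh i) × Act I A × (S i).St (hh i))) : Prop :=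
  PolicySat S hh CM i d ∧ ∀ d', d' ⊆ d → PolicySat S hh CM i d' → d' = d

/-- The communicating system (over the participant type `I` of names `k_i`)
determined by the family of transition relations `Kd` of a connection policy. -/
def policyCS (S : ∀ i, CS (P i) A) (hh : ∀ i, P i)
    (Kd : ∀ i, Set ((S i).St (hh i) × Act I A × (S i).St (hh i))) : CS I A where
  St := fun i => (S i).St (hh i)
  init := fun i => (S i).init (hh i)
  delta := Kd

/-- `Kd` is a connection policy for the interfaces `hh` complying with `CM`. -/
def IsConnPolicy (S : ∀ i, CS (P i) A) (hh : ∀ i, P i) (CM : Set (I × A × I))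
    (Kd : ∀ i, Set ((S i).St (hh i) × Act I A × (S i).St (hh i))) : Prop :=
  ∀ i, InIS S hh CM i (Kd i)

/-- States of the gateway for interface `hh i`: the original states plus one
fresh state per transition of `M_{h_i}`. -/
abbrev GWState (S : ∀ i, CS (P i) A) (hh : ∀ i, P i) (i : I) : Type :=
  (S i).St (hh i) ⊕ ((S i).St (hh i) × Act (P i) A × (S i).St (hh i))

/-- Lifting of a local action of system `i` to the composed participant type. -/
def liftAct (i : I) (l : Act (P i) A) : Act ((j : I) × P j) A :=
  Act.mk ⟨i, l.snd⟩ ⟨i, l.rcv⟩ l.dir l.msg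

/-- Transition relation of the gateway `M_{h_i} ⟲ M_{k_i}`. -/
def GWdelta (S : ∀ i, CS (P i) A) (hh : ∀ i, P i)
    (Kd : ∀ i, Set ((S i).St (hh i) × Act I A × (S i).St (hh i))) (i : I) :
    Set (GWState S hh i × Act ((j : I) × P j) A × GWState S hh i) :=
  {x | ∃ q a q',
    (∃ s r, (q, Act.mk (hh i) s Dir.out a, q') ∈ (S i).delta (hh i) ∧
        (q, Act.mk r i Dir.inp a, q') ∈ Kd i ∧
        (x = (Sum.inl q, Act.mk ⟨r, hh r⟩ ⟨i, hh i⟩ Dir.inp a,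
              Sum.inr (q, Act.mk (hh i) s Dir.out a, q')) ∨
         x = (Sum.inr (q, Act.mk (hh i) s Dir.out a, q'),
              Act.mk ⟨i, hh i⟩ ⟨i, s⟩ Dir.out a, Sum.inl q'))) ∨
    (∃ s r, (q, Act.mk s (hh i) Dir.inp a, q') ∈ (S i).delta (hh i) ∧
        (q, Act.mk i r Dir.out a, q') ∈ Kd i ∧
        (x = (Sum.inl q, Act.mk ⟨i, s⟩ ⟨i, hh i⟩ Dir.inp a,
              Sum.inr (q, Act.mk s (hh i) Dir.inp a, q')) ∨
         x = (Sum.inr (q, Act.mk s (hh i) Dir.inp a, q'),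
              Act.mk ⟨i, hh i⟩ ⟨r, hh r⟩ Dir.out a, Sum.inl q')))}

open Classical in
/-- State type of the machine of participant `⟨i, p⟩` in the multicomposition:
the gateway state type if `p` is the interface of system `i`, the original
state type otherwise. -/
noncomputable def MCSt (S : ∀ i, CS (P i) A) (hh : ∀ i, P i) (x : (i : I) × P i) : Type :=
  if x.2 = hh x.1 then GWState S hh x.1 else (S x.1).St x.2

/-- The multicomposition `MC({S_i}, K)`: all machines of the single systems,
with the machine of each interface `hh i` replaced by its gateway. -/
noncomputable def MC (S : ∀ i, CS (P i) A) (hh : ∀ i, P i)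
    (Kd : ∀ i, Set ((S i).St (hh i) × Act I A × (S i).St (hh i))) :
    CS ((i : I) × P i) A where
  St := MCSt S hh
  init := fun x => by
    by_cases hp : x.2 = hh x.1
    · have h : MCSt S hh x = GWState S hh x.1 := by simp [MCSt, hp]
      rw [h]; exact Sum.inl ((S x.1).init (hh x.1))
    · have h : MCSt S hh x = (S x.1).St x.2 := by simp [MCSt, hp]
      rw [h]; exact (S x.1).init x.2
  delta := fun x => by
    by_cases hp : x.2 = hh x.1
    · have h : MCSt S hh x = GWState S hh x.1 := by simp [MCSt, hp]
      rw [h]; exact GWdelta S hh Kd x.1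
    · have h : MCSt S hh x = (S x.1).St x.2 := by simp [MCSt, hp]
      rw [h]
      exact {t | ∃ q l q', (q, l, q') ∈ (S x.1).delta x.2 ∧ t = (q, liftAct x.1 l, q')}

/-- The state of the gateway of interface `hh i` in a configuration of the
multicomposition, as an element of `GWState`. -/
noncomputable def toGW (S : ∀ i, CS (P i) A) (hh : ∀ i, P i) (i : I)
    (x : MCSt S hh ⟨i, hh i⟩) : GWState S hh i :=
  cast (by simp [MCSt]) x

/-- The state of a non-interface participant in a configuration of the
multicomposition, as an element of its original state type. -/
noncomputable def toLoc (S : ∀ i, CS (P i) A) (hh : ∀ i, P i) {i : I} {p : P i}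
    (hp : p ≠ hh i) (x : MCSt S hh ⟨i, p⟩) : (S i).St p :=
  cast (by simp [MCSt, hp]) x

/-- Projection of a configuration of the multicomposition to system `S i`,
assuming the gateway state of `hh i` is not a fresh intermediate state
(i.e. it is of the form `Sum.inl q`). -/
noncomputable def projSys (S : ∀ i, CS (P i) A) (hh : ∀ i, P i)
    (Kd : ∀ i, Set ((S i).St (hh i) × Act I A × (S i).St (hh i)))
    (i : I) (s : Config (MC S hh Kd))
    (hq : ∃ q, toGW S hh i (s.st ⟨i, hh i⟩) = Sum.inl q) : Config (S i) where
  st := fun p => by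
    by_cases hp : p = hh i
    · rw [hp]; exact hq.choose
    · exact toLoc S hh hp (s.st ⟨i, p⟩)
  ch := fun p q => s.ch ⟨i, p⟩ ⟨i, q⟩

/-- Projection of a configuration of the multicomposition to the connection
policy `K`, assuming no gateway is in a fresh intermediate state. -/
noncomputable def projPolicy (S : ∀ i, CS (P i) A) (hh : ∀ i, P i)
    (Kd : ∀ i, Set ((S i).St (hh i) × Act I A × (S i).St (hh i)))
    (s : Config (MC S hh Kd))
    (hq : ∀ i, ∃ q, toGW S hh i (s.st ⟨i, hh i⟩) = Sum.inl q) :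
    Config (policyCS S hh Kd) where
  st := fun i => (hq i).choose
  ch := fun i j => s.ch ⟨i, hh i⟩ ⟨j, hh j⟩

end Composition

end CFSM
open CFSM
section Aux
variable {I : Type} {P : I → Type} {A : Type}
variable (S : ∀ i, CS (P i) A) (hh : ∀ i, P i)
  (Kd : ∀ i, Set ((S i).St (hh i) × Act I A × (S i).St (hh i)))

lemma eqmpr_set {α β : Type} {PP B : Type} (pf : Set (β × Act PP B × β) = Set (α × Act PP B × α))
    (e2 : β = α) (s : Set (α × Act PP B × α)) :
    Eq.mpr pf s = {t : β × Act PP B × β | (cast e2 t.1, t.2.1, cast e2 t.2.2) ∈ s} := by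
  subst e2; rfl

lemma cast_eqmpr {α β : Type} (pf : β = α) (pf2 : β = α) (v : α) :
    cast pf2 (Eq.mpr pf v) = v := by subst pf2; rfl

lemma cast_symm_cast {α β : Type} (h : α = β) (h2 : α = β) (x : β) :
    cast h (cast h2.symm x) = x := by subst h; rfl

lemma delta_gw (i : I) :
    (MC S hh Kd).delta ⟨i, hh i⟩ =
      {t | (toGW S hh i t.1, t.2.1, toGW S hh i t.2.2) ∈ GWdelta S hh Kd i} := by
  letI : ∀ (pr : Prop), Decidable pr := Classical.propDecidable
  show dite _ _ _ = _
  exact (dif_pos rfl).trans (eqmpr_set _ (by simp [MCSt]) _)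

lemma delta_loc (i : I) (p : P i) (hp : p ≠ hh i) :
    (MC S hh Kd).delta ⟨i, p⟩ =
      {t | ∃ q l q', (q, l, q') ∈ (S i).delta p ∧
        (toLoc S hh hp t.1, t.2.1, toLoc S hh hp t.2.2) = (q, liftAct i l, q')} := by
  letI : ∀ (pr : Prop), Decidable pr := Classical.propDecidable
  show dite _ _ _ = _
  exact (dif_neg hp).trans ((eqmpr_set _ (show MCSt S hh ⟨i,p⟩ = (S i).St p by simp [MCSt, hp]) _).trans rfl)

lemma init_gw (i : I) : toGW S hh i ((MC S hh Kd).init ⟨i, hh i⟩) = Sum.inl ((S i).init (hh i)) := by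
  letI : ∀ (pr : Prop), Decidable pr := Classical.propDecidable
  show cast _ (dite _ _ _) = _
  rw [dif_pos rfl]
  exact cast_eqmpr _ _ _

lemma init_loc (i : I) (p : P i) (hp : p ≠ hh i) :
    toLoc S hh hp ((MC S hh Kd).init ⟨i, p⟩) = (S i).init p := by
  letI : ∀ (pr : Prop), Decidable pr := Classical.propDecidable
  show cast _ (dite _ _ _) = _
  rw [dif_neg hp]
  exact cast_eqmpr _ _ _

lemma toGW_cast (i : I) (h : GWState S hh i = MCSt S hh ⟨i, hh i⟩) (y : GWState S hh i) :
    toGW S hh i (cast h y) = y := by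
  show cast _ _ = _
  rw [cast_cast]
  exact eq_of_heq (cast_heq _ _)

lemma smk_snd {i : I} {p q : P i} (h : (⟨i,p⟩ : (j : I) × P j) = ⟨i,q⟩) : p = q := by
  simpa using h

lemma smk_ne {i : I} {p q : P i} (h : p ≠ q) : (⟨i,p⟩ : (j : I) × P j) ≠ ⟨i,q⟩ :=
  fun hc => h (smk_snd hc)

lemma smk_ne_fst {i j : I} {p : P i} {q : P j} (h : i ≠ j) :
    (⟨i,p⟩ : (j : I) × P j) ≠ ⟨j,q⟩ :=
  fun hc => h (congrArg Sigma.fst hc)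

lemma configExt {Pp B : Type} {S' : CS Pp B} {c d : Config S'}
    (h1 : ∀ p, c.st p = d.st p) (h2 : ∀ p q, c.ch p q = d.ch p q) : c = d := by
  cases c; cases d
  congr 1
  · exact funext h1
  · funext p q; exact h2 p q

/-- S-projection state of a gateway state. -/
def gwSt {i : I} (x : GWState S hh i) : (S i).St (hh i) :=
  match x with
  | .inl q => q
  | .inr (q, l, q') => match l.dir with | .out => q | .inp => q'

/-- policy-projection state of a gateway state. -/
def gwKSt {i : I} (x : GWState S hh i) : (S i).St (hh i) :=
  match x with
  | .inl q => q
  | .inr (q, l, q') => match l.dir with | .out => q' | .inp => q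

noncomputable def sigma (c : Config (MC S hh Kd)) (i : I) : Config (S i) where
  st := fun p =>
    letI : ∀ (pr : Prop), Decidable pr := Classical.propDecidable
    dite (p = hh i)
      (fun hp => cast (congrArg (S i).St hp.symm) (gwSt S hh (toGW S hh i (c.st ⟨i, hh i⟩))))
      (fun hp => toLoc S hh hp (c.st ⟨i, p⟩))
  ch := fun p q => c.ch ⟨i, p⟩ ⟨i, q⟩

lemma sigma_st_hh (c : Config (MC S hh Kd)) (i : I) :
    (sigma S hh Kd c i).st (hh i) = gwSt S hh (toGW S hh i (c.st ⟨i, hh i⟩)) := by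
  letI : ∀ (pr : Prop), Decidable pr := Classical.propDecidable
  show dite _ _ _ = _
  rw [dif_pos rfl]
  exact eq_of_heq (cast_heq _ _)

lemma sigma_st_ne (c : Config (MC S hh Kd)) (i : I) {p : P i} (hp : p ≠ hh i) :
    (sigma S hh Kd c i).st p = toLoc S hh hp (c.st ⟨i, p⟩) := by
  letI : ∀ (pr : Prop), Decidable pr := Classical.propDecidable
  show dite _ _ _ = _
  rw [dif_neg hp]

noncomputable def kappa (c : Config (MC S hh Kd)) : Config (policyCS S hh Kd) where
  st := fun i => gwKSt S hh (toGW S hh i (c.st ⟨i, hh i⟩))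
  ch := fun i j => c.ch ⟨i, hh i⟩ ⟨j, hh j⟩

lemma sigma_congr {c c' : Config (MC S hh Kd)} (i : I)
    (hst : ∀ p : P i, c'.st ⟨i, p⟩ = c.st ⟨i, p⟩)
    (hch : ∀ p q : P i, c'.ch ⟨i, p⟩ ⟨i, q⟩ = c.ch ⟨i, p⟩ ⟨i, q⟩) :
    sigma S hh Kd c' i = sigma S hh Kd c i := by
  apply configExt
  · intro p
    by_cases hp : p = hh i
    · subst hp
      rw [sigma_st_hh, sigma_st_hh, hst]
    · rw [sigma_st_ne _ _ _ _ _ hp, sigma_st_ne _ _ _ _ _ hp, hst]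
  · intro p q; exact hch p q

lemma sigma_congr_gw {c c' : Config (MC S hh Kd)} (i : I)
    (hst : ∀ p : P i, p ≠ hh i → c'.st ⟨i, p⟩ = c.st ⟨i, p⟩)
    (hgw : gwSt S hh (toGW S hh i (c'.st ⟨i, hh i⟩)) = gwSt S hh (toGW S hh i (c.st ⟨i, hh i⟩)))
    (hch : ∀ p q : P i, c'.ch ⟨i, p⟩ ⟨i, q⟩ = c.ch ⟨i, p⟩ ⟨i, q⟩) :
    sigma S hh Kd c' i = sigma S hh Kd c i := by
  apply configExt
  · intro p
    by_cases hp : p = hh i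
    · subst hp
      rw [sigma_st_hh, sigma_st_hh, hgw]
    · rw [sigma_st_ne _ _ _ _ _ hp, sigma_st_ne _ _ _ _ _ hp, hst p hp]
  · intro p q; exact hch p q

lemma kappa_congr {c c' : Config (MC S hh Kd)}
    (hst : ∀ j, gwKSt S hh (toGW S hh j (c'.st ⟨j, hh j⟩)) =
                gwKSt S hh (toGW S hh j (c.st ⟨j, hh j⟩)))
    (hch : ∀ j j', c'.ch ⟨j, hh j⟩ ⟨j', hh j'⟩ = c.ch ⟨j, hh j⟩ ⟨j', hh j'⟩) :
    kappa S hh Kd c' = kappa S hh Kd c := by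
  apply configExt
  · intro j; exact hst j
  · intro j j'; exact hch j j'

structure MCInv (c : Config (MC S hh Kd)) : Prop where
  cross : ∀ (x y : (j : I) × P j), x.1 ≠ y.1 → (x.2 ≠ hh x.1 ∨ y.2 ≠ hh y.1) → c.ch x y = []
  sys : ∀ i, sigma S hh Kd c i ∈ RC (S i)
  pol : kappa S hh Kd c ∈ RC (policyCS S hh Kd)
  pend : ∀ i t, toGW S hh i (c.st ⟨i, hh i⟩) = Sum.inr t →
    ∃ l y, (Sum.inr t, l, y) ∈ GWdelta S hh Kd i

end Aux
section Aux2
variable {I : Type} {P : I → Type} {A : Type}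
variable (S : ∀ i, CS (P i) A) (hh : ∀ i, P i)
  (CM : Set (I × A × I))
  (Kd : ∀ i, Set ((S i).St (hh i) × Act I A × (S i).St (hh i)))

open CFSM

lemma genKd (hK : IsConnPolicy S hh CM Kd) (i : I)
    {x : (S i).St (hh i) × Act I A × (S i).St (hh i)} (hx : x ∈ Kd i) :
    (∃ r a j, x.2.1 = Act.mk i j Dir.out a ∧ j ≠ i ∧
        (x.1, Act.mk r (hh i) Dir.inp a, x.2.2) ∈ (S i).delta (hh i)) ∨
    (∃ r a j, x.2.1 = Act.mk j i Dir.inp a ∧ j ≠ i ∧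
        (x.1, Act.mk (hh i) r Dir.out a, x.2.2) ∈ (S i).delta (hh i)) := by
  set Gen : (S i).St (hh i) × Act I A × (S i).St (hh i) → Prop := fun y =>
    (∃ r a j, y.2.1 = Act.mk i j Dir.out a ∧ j ≠ i ∧
        (y.1, Act.mk r (hh i) Dir.inp a, y.2.2) ∈ (S i).delta (hh i)) ∨
    (∃ r a j, y.2.1 = Act.mk j i Dir.inp a ∧ j ≠ i ∧
        (y.1, Act.mk (hh i) r Dir.out a, y.2.2) ∈ (S i).delta (hh i)) with hGen
  have hsub : {y ∈ Kd i | Gen y} ⊆ Kd i := Set.sep_subset _ _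
  have hsat : PolicySat S hh CM i {y ∈ Kd i | Gen y} := by
    constructor
    · intro q r a q' hq
      obtain ⟨j, hji, hcm, hmem⟩ := (hK i).1.1 q r a q' hq
      exact ⟨j, hji, hcm, ⟨hmem, Or.inl ⟨r, a, j, rfl, hji, hq⟩⟩⟩
    · intro q r a q' hq
      obtain ⟨j, hji, hcm, hmem⟩ := (hK i).1.2 q r a q' hq
      exact ⟨j, hji, hcm, ⟨hmem, Or.inr ⟨r, a, j, rfl, hji, hq⟩⟩⟩
  have := (hK i).2 _ hsub hsat
  rw [← this] at hx
  exact hx.2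

lemma inv_init : MCInv S hh Kd (MC S hh Kd).initConfig := by
  constructor
  · intro x y _ _; rfl
  · intro i
    have : sigma S hh Kd (MC S hh Kd).initConfig i = (S i).initConfig := by
      apply configExt
      · intro p
        by_cases hp : p = hh i
        · subst hp
          rw [sigma_st_hh]
          show gwSt S hh (toGW S hh i ((MC S hh Kd).init ⟨i, hh i⟩)) = _
          rw [init_gw]
          rfl
        · rw [sigma_st_ne _ _ _ _ _ hp]
          show toLoc S hh hp ((MC S hh Kd).init ⟨i, p⟩) = _
          rw [init_loc _ _ _ _ _ hp]
          rfl
      · intro p q; rfl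
    rw [this]
    exact Relation.ReflTransGen.refl
  · have : kappa S hh Kd (MC S hh Kd).initConfig = (policyCS S hh Kd).initConfig := by
      apply configExt
      · intro j
        show gwKSt S hh (toGW S hh j ((MC S hh Kd).init ⟨j, hh j⟩)) = _
        rw [init_gw]
        rfl
      · intro j j'; rfl
    rw [this]
    exact Relation.ReflTransGen.refl
  · intro i t ht
    rw [show (MC S hh Kd).initConfig.st ⟨i, hh i⟩ = (MC S hh Kd).init ⟨i, hh i⟩ from rfl,
      init_gw] at ht
    simp at ht

end Aux2
section Aux3
variable {I : Type} {P : I → Type} {A : Type}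
variable (S : ∀ i, CS (P i) A) (hh : ∀ i, P i)
  (CM : Set (I × A × I))
  (Kd : ∀ i, Set ((S i).St (hh i) × Act I A × (S i).St (hh i)))

open CFSM

lemma inv_step (hwf : ∀ i, (S i).WellFormed) (hK : IsConnPolicy S hh CM Kd)
    {c c' : Config (MC S hh Kd)} {l : Act ((j : I) × P j) A}
    (hI : MCInv S hh Kd c) (h : StepL (MC S hh Kd) c l c') : MCInv S hh Kd c' := by
  obtain ⟨ls, lr, ld, la⟩ := l
  cases ld
  case out =>
    obtain ⟨h1, h2, h3, h4⟩ := h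
    obtain ⟨i, p⟩ := ls
    by_cases hp : p = hh i
    · subst hp
      rw [delta_gw] at h1
      simp only [Set.mem_setOf_eq, GWdelta] at h1
      obtain ⟨q, a, q', hb⟩ := h1
      rcases hb with ⟨s, r, hδ, hKd, hx⟩ | ⟨s, r, hδ, hKd, hx⟩
      · rcases hx with hx | hx
        · simp [Prod.mk.injEq, Act.mk.injEq] at hx
        · -- case B : second half of an output-forwarding
          simp only [Prod.mk.injEq, Act.mk.injEq, true_and, and_true] at hx
          obtain ⟨hsrc, ⟨hlr, hla⟩, htgt⟩ := hx
          subst hlr; subst hla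
          have hwfδ : hh i ≠ s := (hwf i (hh i) _ hδ).2
          refine ⟨?_, ?_, ?_, ?_⟩
          · intro x y hxy hor
            rw [h4 x y ?_]
            · exact hI.cross x y hxy hor
            · intro hc; injection hc with hc1 hc2
              rw [hc1, hc2] at hxy; exact hxy rfl
          · intro j
            by_cases hj : j = i
            · subst hj
              refine Relation.ReflTransGen.tail (hI.sys j)
                ⟨Act.mk (hh j) s Dir.out la, ?_, ?_, ?_, ?_⟩
              · show ((sigma S hh Kd c j).st (hh j), _, (sigma S hh Kd c' j).st (hh j)) ∈ _
                rw [sigma_st_hh, sigma_st_hh, hsrc, htgt]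
                exact hδ
              · intro pp hpp
                show (sigma S hh Kd c' j).st pp = (sigma S hh Kd c j).st pp
                rw [sigma_st_ne _ _ _ _ _ hpp, sigma_st_ne _ _ _ _ _ hpp, h2 _ (smk_ne hpp)]
              · exact h3
              · intro pp qq hne
                show c'.ch ⟨j, pp⟩ ⟨j, qq⟩ = c.ch ⟨j, pp⟩ ⟨j, qq⟩
                apply h4
                intro hc; apply hne
                injection hc with hc1 hc2
                rw [smk_snd hc1, smk_snd hc2]
            · have he : sigma S hh Kd c' j = sigma S hh Kd c j :=
                sigma_congr S hh Kd j (fun pp => h2 _ (smk_ne_fst hj))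
                  (fun pp qq => h4 _ _ (by
                    intro hc; injection hc with hc1 hc2
                    exact hj (congrArg Sigma.fst hc1)))
              rw [he]; exact hI.sys j
          · have he : kappa S hh Kd c' = kappa S hh Kd c := by
              refine kappa_congr S hh Kd ?_ ?_
              · intro j
                by_cases hj : j = i
                · subst hj; rw [hsrc, htgt]; rfl
                · rw [h2 _ (smk_ne_fst hj)]
              · intro j j'
                apply h4
                intro hc; injection hc with hc1 hc2
                have hj' : j' = i := congrArg Sigma.fst hc2
                subst hj'
                exact hwfδ (smk_snd hc2)
            rw [he]; exact hI.pol
          · intro j t ht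
            by_cases hj : j = i
            · subst hj; rw [htgt] at ht; cases ht
            · rw [h2 _ (smk_ne_fst hj)] at ht; exact hI.pend j t ht
      · rcases hx with hx | hx
        · simp [Prod.mk.injEq, Act.mk.injEq] at hx
        · -- case D : second half of an input-forwarding
          simp only [Prod.mk.injEq, Act.mk.injEq, true_and, and_true] at hx
          obtain ⟨hsrc, ⟨hlr, hla⟩, htgt⟩ := hx
          subst hlr; subst hla
          have hri : r ≠ i := by
            rcases genKd S hh CM Kd hK i hKd with ⟨r', a', j', he, hj, _⟩ | ⟨r', a', j', he, hj, _⟩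
            · simp only [Act.mk.injEq, true_and] at he
              exact he.1 ▸ hj
            · simp [Act.mk.injEq] at he
          refine ⟨?_, ?_, ?_, ?_⟩
          · intro x y hxy hor
            rw [h4 x y ?_]
            · exact hI.cross x y hxy hor
            · intro hc; injection hc with hc1 hc2
              rw [hc1, hc2] at hor
              rcases hor with h | h <;> exact h rfl
          · intro j
            by_cases hj : j = i
            · subst hj
              have he : sigma S hh Kd c' j = sigma S hh Kd c j := by
                refine sigma_congr_gw S hh Kd j (fun pp hpp => h2 _ (smk_ne hpp)) ?_
                  (fun pp qq => h4 _ _ (by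
                    intro hc; injection hc with hc1 hc2
                    exact hri (congrArg Sigma.fst hc2).symm))
                rw [hsrc, htgt]; rfl
              rw [he]; exact hI.sys j
            · have he : sigma S hh Kd c' j = sigma S hh Kd c j :=
                sigma_congr S hh Kd j (fun pp => h2 _ (smk_ne_fst hj))
                  (fun pp qq => h4 _ _ (by
                    intro hc; injection hc with hc1 hc2
                    exact hj (congrArg Sigma.fst hc1)))
              rw [he]; exact hI.sys j
          · refine Relation.ReflTransGen.tail (hI.pol) ⟨Act.mk i r Dir.out la, ?_, ?_, ?_, ?_⟩
            · show (gwKSt S hh (toGW S hh i (c.st ⟨i, hh i⟩)), _,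
                    gwKSt S hh (toGW S hh i (c'.st ⟨i, hh i⟩))) ∈ Kd i
              rw [hsrc, htgt]
              exact hKd
            · intro j hj
              show gwKSt S hh (toGW S hh j (c'.st ⟨j, hh j⟩)) = _
              rw [h2 _ (smk_ne_fst hj)]; rfl
            · exact h3
            · intro j j' hne
              show c'.ch ⟨j, hh j⟩ ⟨j', hh j'⟩ = c.ch ⟨j, hh j⟩ ⟨j', hh j'⟩
              apply h4
              intro hc; apply hne
              injection hc with hc1 hc2
              simp only [Prod.mk.injEq]
              exact ⟨congrArg Sigma.fst hc1, congrArg Sigma.fst hc2⟩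
          · intro j t ht
            by_cases hj : j = i
            · subst hj; rw [htgt] at ht; cases ht
            · rw [h2 _ (smk_ne_fst hj)] at ht; exact hI.pend j t ht
    · -- non-interface output
      rw [delta_loc S hh Kd i p hp] at h1
      simp only [Set.mem_setOf_eq, Prod.mk.injEq] at h1
      obtain ⟨q0, l0, q0', hδ, hq, hl, hq'⟩ := h1
      obtain ⟨l0s, l0r, l0d, l0m⟩ := l0
      simp only [liftAct, Act.mk.injEq] at hl
      obtain ⟨hl1, hl2, hl3, hl4⟩ := hl
      subst hl2; subst hl4; subst hl3
      have hps : p = l0s := smk_snd hl1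
      subst hps
      have hgwne : ∀ j : I, (⟨j, hh j⟩ : (k : I) × P k) ≠ ⟨i, p⟩ := by
        intro j hc
        have hji : j = i := congrArg Sigma.fst hc
        subst hji
        exact hp (smk_snd hc).symm
      refine ⟨?_, ?_, ?_, ?_⟩
      · intro x y hxy hor
        rw [h4 x y ?_]
        · exact hI.cross x y hxy hor
        · intro hc; injection hc with hc1 hc2
          rw [hc1, hc2] at hxy; exact hxy rfl
      · intro j
        by_cases hj : j = i
        · subst hj
          refine Relation.ReflTransGen.tail (hI.sys j)
            ⟨Act.mk p l0r Dir.out la, ?_, ?_, ?_, ?_⟩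
          · show ((sigma S hh Kd c j).st p, _, (sigma S hh Kd c' j).st p) ∈ _
            rw [sigma_st_ne _ _ _ _ _ hp, sigma_st_ne _ _ _ _ _ hp, hq, hq']
            exact hδ
          · intro pp hpp
            show (sigma S hh Kd c' j).st pp = (sigma S hh Kd c j).st pp
            by_cases hph : pp = hh j
            · subst hph
              rw [sigma_st_hh, sigma_st_hh, h2 _ (smk_ne (fun e => hp e.symm))]
            · rw [sigma_st_ne _ _ _ _ _ hph, sigma_st_ne _ _ _ _ _ hph, h2 _ (smk_ne hpp)]
          · exact h3
          · intro pp qq hne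
            show c'.ch ⟨j, pp⟩ ⟨j, qq⟩ = c.ch ⟨j, pp⟩ ⟨j, qq⟩
            apply h4
            intro hc; apply hne
            injection hc with hc1 hc2
            rw [smk_snd hc1, smk_snd hc2]
        · have he : sigma S hh Kd c' j = sigma S hh Kd c j :=
            sigma_congr S hh Kd j (fun pp => h2 _ (smk_ne_fst hj))
              (fun pp qq => h4 _ _ (by
                intro hc; injection hc with hc1 hc2
                exact hj (congrArg Sigma.fst hc1)))
          rw [he]; exact hI.sys j
      · have he : kappa S hh Kd c' = kappa S hh Kd c := by
          refine kappa_congr S hh Kd ?_ ?_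
          · intro j
            rw [h2 _ (hgwne j)]
          · intro j j'
            apply h4
            intro hc; injection hc with hc1 hc2
            exact hgwne j hc1
        rw [he]; exact hI.pol
      · intro j t ht
        rw [h2 _ (hgwne j)] at ht
        exact hI.pend j t ht
  case inp =>
    obtain ⟨h1, h2, h3, h4⟩ := h
    obtain ⟨i, p⟩ := lr
    by_cases hp : p = hh i
    · subst hp
      rw [delta_gw] at h1
      simp only [Set.mem_setOf_eq, GWdelta] at h1
      obtain ⟨q, a, q', hb⟩ := h1
      rcases hb with ⟨s, r, hδ, hKd, hx⟩ | ⟨s, r, hδ, hKd, hx⟩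
      · rcases hx with hx | hx
        · -- case A : first half of an output-forwarding (cross input)
          simp only [Prod.mk.injEq, Act.mk.injEq, true_and, and_true] at hx
          obtain ⟨hsrc, ⟨hls, hla⟩, htgt⟩ := hx
          subst hls; subst hla
          have hri : r ≠ i := by
            rcases genKd S hh CM Kd hK i hKd with ⟨r', a', j', he, hj, _⟩ | ⟨r', a', j', he, hj, _⟩
            · simp [Act.mk.injEq] at he
            · simp only [Act.mk.injEq, and_true] at he
              exact he.1 ▸ hj
          refine ⟨?_, ?_, ?_, ?_⟩
          · intro x y hxy hor
            rw [h4 x y ?_]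
            · exact hI.cross x y hxy hor
            · intro hc; injection hc with hc1 hc2
              rw [hc1, hc2] at hor
              rcases hor with h | h <;> exact h rfl
          · intro j
            by_cases hj : j = i
            · subst hj
              have he : sigma S hh Kd c' j = sigma S hh Kd c j := by
                refine sigma_congr_gw S hh Kd j (fun pp hpp => h2 _ (smk_ne hpp)) ?_
                  (fun pp qq => h4 _ _ (by
                    intro hc; injection hc with hc1 hc2
                    exact hri (congrArg Sigma.fst hc1).symm))
                rw [hsrc, htgt]; rfl
              rw [he]; exact hI.sys j
            · have he : sigma S hh Kd c' j = sigma S hh Kd c j :=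
                sigma_congr S hh Kd j (fun pp => h2 _ (smk_ne_fst hj))
                  (fun pp qq => h4 _ _ (by
                    intro hc; injection hc with hc1 hc2
                    exact hj (congrArg Sigma.fst hc2)))
              rw [he]; exact hI.sys j
          · refine Relation.ReflTransGen.tail (hI.pol) ⟨Act.mk r i Dir.inp la, ?_, ?_, ?_, ?_⟩
            · show (gwKSt S hh (toGW S hh i (c.st ⟨i, hh i⟩)), _,
                    gwKSt S hh (toGW S hh i (c'.st ⟨i, hh i⟩))) ∈ Kd i
              rw [hsrc, htgt]
              exact hKd
            · intro j hj
              show gwKSt S hh (toGW S hh j (c'.st ⟨j, hh j⟩)) = _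
              rw [h2 _ (smk_ne_fst hj)]; rfl
            · exact h3
            · intro j j' hne
              show c'.ch ⟨j, hh j⟩ ⟨j', hh j'⟩ = c.ch ⟨j, hh j⟩ ⟨j', hh j'⟩
              apply h4
              intro hc; apply hne
              injection hc with hc1 hc2
              simp only [Prod.mk.injEq]
              exact ⟨congrArg Sigma.fst hc1, congrArg Sigma.fst hc2⟩
          · intro j t ht
            by_cases hj : j = i
            · subst hj
              rw [htgt] at ht
              injection ht with ht1
              subst ht1
              exact ⟨Act.mk ⟨j, hh j⟩ ⟨j, s⟩ Dir.out la, Sum.inl q',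
                ⟨q, la, q', Or.inl ⟨s, r, hδ, hKd, Or.inr rfl⟩⟩⟩
            · rw [h2 _ (smk_ne_fst hj)] at ht; exact hI.pend j t ht
        · simp [Prod.mk.injEq, Act.mk.injEq] at hx
      · rcases hx with hx | hx
        · -- case C : first half of an input-forwarding (internal input)
          simp only [Prod.mk.injEq, Act.mk.injEq, true_and, and_true] at hx
          obtain ⟨hsrc, ⟨hls, hla⟩, htgt⟩ := hx
          subst hls; subst hla
          have hwfδ : s ≠ hh i := (hwf i (hh i) _ hδ).2
          refine ⟨?_, ?_, ?_, ?_⟩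
          · intro x y hxy hor
            rw [h4 x y ?_]
            · exact hI.cross x y hxy hor
            · intro hc; injection hc with hc1 hc2
              rw [hc1, hc2] at hxy; exact hxy rfl
          · intro j
            by_cases hj : j = i
            · subst hj
              refine Relation.ReflTransGen.tail (hI.sys j)
                ⟨Act.mk s (hh j) Dir.inp la, ?_, ?_, ?_, ?_⟩
              · show ((sigma S hh Kd c j).st (hh j), _, (sigma S hh Kd c' j).st (hh j)) ∈ _
                rw [sigma_st_hh, sigma_st_hh, hsrc, htgt]
                exact hδ
              · intro pp hpp
                show (sigma S hh Kd c' j).st pp = (sigma S hh Kd c j).st pp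
                rw [sigma_st_ne _ _ _ _ _ hpp, sigma_st_ne _ _ _ _ _ hpp, h2 _ (smk_ne hpp)]
              · exact h3
              · intro pp qq hne
                show c'.ch ⟨j, pp⟩ ⟨j, qq⟩ = c.ch ⟨j, pp⟩ ⟨j, qq⟩
                apply h4
                intro hc; apply hne
                injection hc with hc1 hc2
                rw [smk_snd hc1, smk_snd hc2]
            · have he : sigma S hh Kd c' j = sigma S hh Kd c j :=
                sigma_congr S hh Kd j (fun pp => h2 _ (smk_ne_fst hj))
                  (fun pp qq => h4 _ _ (by
                    intro hc; injection hc with hc1 hc2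
                    exact hj (congrArg Sigma.fst hc1)))
              rw [he]; exact hI.sys j
          · have he : kappa S hh Kd c' = kappa S hh Kd c := by
              refine kappa_congr S hh Kd ?_ ?_
              · intro j
                by_cases hj : j = i
                · subst hj; rw [hsrc, htgt]; rfl
                · rw [h2 _ (smk_ne_fst hj)]
              · intro j j'
                apply h4
                intro hc; injection hc with hc1 hc2
                have hji : j = i := congrArg Sigma.fst hc1
                subst hji
                exact hwfδ (smk_snd hc1).symm
            rw [he]; exact hI.pol
          · intro j t ht
            by_cases hj : j = i
            · subst hj
              rw [htgt] at ht
              injection ht with ht1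
              subst ht1
              exact ⟨Act.mk ⟨j, hh j⟩ ⟨r, hh r⟩ Dir.out la, Sum.inl q',
                ⟨q, la, q', Or.inr ⟨s, r, hδ, hKd, Or.inr rfl⟩⟩⟩
            · rw [h2 _ (smk_ne_fst hj)] at ht; exact hI.pend j t ht
        · simp [Prod.mk.injEq, Act.mk.injEq] at hx
    · -- non-interface input
      rw [delta_loc S hh Kd i p hp] at h1
      simp only [Set.mem_setOf_eq, Prod.mk.injEq] at h1
      obtain ⟨q0, l0, q0', hδ, hq, hl, hq'⟩ := h1
      obtain ⟨l0s, l0r, l0d, l0m⟩ := l0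
      simp only [liftAct, Act.mk.injEq] at hl
      obtain ⟨hl1, hl2, hl3, hl4⟩ := hl
      subst hl1; subst hl4; subst hl3
      have hps : p = l0r := smk_snd hl2
      subst hps
      have hgwne : ∀ j : I, (⟨j, hh j⟩ : (k : I) × P k) ≠ ⟨i, p⟩ := by
        intro j hc
        have hji : j = i := congrArg Sigma.fst hc
        subst hji
        exact hp (smk_snd hc).symm
      refine ⟨?_, ?_, ?_, ?_⟩
      · intro x y hxy hor
        rw [h4 x y ?_]
        · exact hI.cross x y hxy hor
        · intro hc; injection hc with hc1 hc2
          rw [hc1, hc2] at hxy; exact hxy rfl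
      · intro j
        by_cases hj : j = i
        · subst hj
          refine Relation.ReflTransGen.tail (hI.sys j)
            ⟨Act.mk l0s p Dir.inp la, ?_, ?_, ?_, ?_⟩
          · show ((sigma S hh Kd c j).st p, _, (sigma S hh Kd c' j).st p) ∈ _
            rw [sigma_st_ne _ _ _ _ _ hp, sigma_st_ne _ _ _ _ _ hp, hq, hq']
            exact hδ
          · intro pp hpp
            show (sigma S hh Kd c' j).st pp = (sigma S hh Kd c j).st pp
            by_cases hph : pp = hh j
            · subst hph
              rw [sigma_st_hh, sigma_st_hh, h2 _ (smk_ne (fun e => hp e.symm))]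
            · rw [sigma_st_ne _ _ _ _ _ hph, sigma_st_ne _ _ _ _ _ hph, h2 _ (smk_ne hpp)]
          · exact h3
          · intro pp qq hne
            show c'.ch ⟨j, pp⟩ ⟨j, qq⟩ = c.ch ⟨j, pp⟩ ⟨j, qq⟩
            apply h4
            intro hc; apply hne
            injection hc with hc1 hc2
            rw [smk_snd hc1, smk_snd hc2]
        · have he : sigma S hh Kd c' j = sigma S hh Kd c j :=
            sigma_congr S hh Kd j (fun pp => h2 _ (smk_ne_fst hj))
              (fun pp qq => h4 _ _ (by
                intro hc; injection hc with hc1 hc2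
                exact hj (congrArg Sigma.fst hc1)))
          rw [he]; exact hI.sys j
      · have he : kappa S hh Kd c' = kappa S hh Kd c := by
          refine kappa_congr S hh Kd ?_ ?_
          · intro j
            rw [h2 _ (hgwne j)]
          · intro j j'
            apply h4
            intro hc; injection hc with hc1 hc2
            exact hgwne j' hc2
        rw [he]; exact hI.pol
      · intro j t ht
        rw [h2 _ (hgwne j)] at ht
        exact hI.pend j t ht

end Aux3
section Aux4
variable {I : Type} {P : I → Type} {A : Type}
variable (S : ∀ i, CS (P i) A) (hh : ∀ i, P i)
  (CM : Set (I × A × I))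
  (Kd : ∀ i, Set ((S i).St (hh i) × Act I A × (S i).St (hh i)))

open CFSM

lemma toLoc_cast (i : I) {p : P i} (hp : p ≠ hh i)
    (h : (S i).St p = MCSt S hh ⟨i, p⟩) (y : (S i).St p) :
    toLoc S hh hp (cast h y) = y := by
  show cast _ _ = _
  rw [cast_cast]
  exact eq_of_heq (cast_heq _ _)

lemma inv_reach (hwf : ∀ i, (S i).WellFormed) (hK : IsConnPolicy S hh CM Kd)
    {c : Config (MC S hh Kd)} (hc : Reach (MC S hh Kd) (MC S hh Kd).initConfig c) :
    MCInv S hh Kd c := by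
  induction hc with
  | refl => exact inv_init S hh Kd
  | tail hr hs ih =>
    obtain ⟨l, hl⟩ := hs
    exact inv_step S hh CM Kd hwf hK ih hl

theorem orphanFree_MC (hwf : ∀ i, (S i).WellFormed)
    (hK : IsConnPolicy S hh CM Kd)
    (hS : ∀ i, OrphanFree (S i))
    (hKfree : OrphanFree (policyCS S hh Kd)) :
    OrphanFree (MC S hh Kd) := by
  intro c hc h
  obtain ⟨hfin, x, y, hne⟩ := h
  have hI := inv_reach S hh CM Kd hwf hK hc
  have hgw : ∀ i, ∃ q, toGW S hh i (c.st ⟨i, hh i⟩) = Sum.inl q ∧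
      FinalSt ((S i).delta (hh i)) q := by
    intro i
    cases hx : toGW S hh i (c.st ⟨i, hh i⟩) with
    | inr t =>
      exfalso
      obtain ⟨l, y', hmem⟩ := hI.pend i t hx
      apply hfin ⟨i, hh i⟩ l
        (cast (show MCSt S hh ⟨i, hh i⟩ = GWState S hh i by simp [MCSt]).symm y')
      rw [delta_gw]
      simp only [Set.mem_setOf_eq]
      rw [hx]
      exact (congrArg (fun z => (Sum.inr t, l, z) ∈ GWdelta S hh Kd i) (toGW_cast S hh i _ y')).mpr hmem
    | inl q =>
      refine ⟨q, rfl, ?_⟩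
      intro l0 q0' hmem0
      obtain ⟨l0s, l0r, l0d, l0m⟩ := l0
      have hsub := (hwf i (hh i) _ hmem0).1
      cases l0d
      case out =>
        have hls : l0s = hh i := hsub
        subst hls
        obtain ⟨j, hji, hcm, hKmem⟩ := (hK i).1.2 q l0r l0m q0' hmem0
        apply hfin ⟨i, hh i⟩ (Act.mk ⟨j, hh j⟩ ⟨i, hh i⟩ Dir.inp l0m)
          (cast (show MCSt S hh ⟨i, hh i⟩ = GWState S hh i by simp [MCSt]).symm
            (Sum.inr (q, Act.mk (hh i) l0r Dir.out l0m, q0')))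
        rw [delta_gw]
        simp only [Set.mem_setOf_eq]
        rw [hx]
        exact (congrArg (fun z => (Sum.inl q, Act.mk ⟨j, hh j⟩ ⟨i, hh i⟩ Dir.inp l0m, z) ∈ GWdelta S hh Kd i)
          (toGW_cast S hh i _ _)).mpr ⟨q, l0m, q0', Or.inl ⟨l0r, j, hmem0, hKmem, Or.inl rfl⟩⟩
      case inp =>
        have hlr : l0r = hh i := hsub
        subst hlr
        obtain ⟨j, hji, hcm, hKmem⟩ := (hK i).1.1 q l0s l0m q0' hmem0
        apply hfin ⟨i, hh i⟩ (Act.mk ⟨i, l0s⟩ ⟨i, hh i⟩ Dir.inp l0m)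
          (cast (show MCSt S hh ⟨i, hh i⟩ = GWState S hh i by simp [MCSt]).symm
            (Sum.inr (q, Act.mk l0s (hh i) Dir.inp l0m, q0')))
        rw [delta_gw]
        simp only [Set.mem_setOf_eq]
        rw [hx]
        exact (congrArg (fun z => (Sum.inl q, Act.mk ⟨i, l0s⟩ ⟨i, hh i⟩ Dir.inp l0m, z) ∈ GWdelta S hh Kd i)
          (toGW_cast S hh i _ _)).mpr ⟨q, l0m, q0', Or.inr ⟨l0s, j, hmem0, hKmem, Or.inl rfl⟩⟩
  have hKfin : ∀ i q, FinalSt ((S i).delta (hh i)) q → FinalSt (Kd i) q := by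
    intro i q hf l q' hmem
    rcases genKd S hh CM Kd hK i hmem with ⟨r, a, j, _, _, hd⟩ | ⟨r, a, j, _, _, hd⟩ <;>
      exact hf _ _ hd
  have hloc : ∀ i p (hp : p ≠ hh i), FinalSt ((S i).delta p) (toLoc S hh hp (c.st ⟨i, p⟩)) := by
    intro i p hp l0 q' hmem
    apply hfin ⟨i, p⟩ (liftAct i l0)
      (cast (show MCSt S hh ⟨i, p⟩ = (S i).St p by simp [MCSt, hp]).symm q')
    rw [delta_loc S hh Kd i p hp]
    simp only [Set.mem_setOf_eq]
    refine ⟨toLoc S hh hp (c.st ⟨i, p⟩), l0, q', hmem, ?_⟩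
    exact congrArg (fun z => (toLoc S hh hp (c.st ⟨i, p⟩), liftAct i l0, z)) (toLoc_cast S hh i hp _ q')
  obtain ⟨ix, px⟩ := x
  obtain ⟨iy, py⟩ := y
  by_cases hxy : ix = iy
  · subst hxy
    apply hS ix (sigma S hh Kd c ix) (hI.sys ix)
    refine ⟨?_, px, py, hne⟩
    intro p
    by_cases hp : p = hh ix
    · subst hp
      rw [sigma_st_hh]
      obtain ⟨q, hq, hqf⟩ := hgw ix
      rw [hq]
      exact hqf
    · rw [sigma_st_ne _ _ _ _ _ hp]
      exact hloc ix p hp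
  · have hcross := hI.cross ⟨ix, px⟩ ⟨iy, py⟩ hxy
    by_cases hpx : px = hh ix
    · by_cases hpy : py = hh iy
      · subst hpx; subst hpy
        apply hKfree (kappa S hh Kd c) hI.pol
        refine ⟨?_, ix, iy, hne⟩
        intro j
        show FinalSt (Kd j) (gwKSt S hh (toGW S hh j (c.st ⟨j, hh j⟩)))
        obtain ⟨q, hq, hqf⟩ := hgw j
        rw [hq]
        exact hKfin j q hqf
      · exact hne (hcross (Or.inr hpy))
    · exact hne (hcross (Or.inl hpx))
end Aux4
open CFSM in
/-- PaI multicomposition preserves orphan-message freeness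
(no condition on mixed states), provided the connection policy is orphan-message free. -/
theorem orphanFree_preserved_by_multicomposition
    {I : Type} [Finite I] {P : I → Type} [∀ i, Finite (P i)] {A : Type} [Finite A]
    (S : ∀ i, CS (P i) A)
    (hfin : ∀ i p, Finite ((S i).St p))
    (hwf : ∀ i, (S i).WellFormed)
    (hh : ∀ i, P i)
    (CM : Set (I × A × I)) (hCM : IsConnModel S hh CM)
    (Kd : ∀ i, Set ((S i).St (hh i) × Act I A × (S i).St (hh i)))
    (hK : IsConnPolicy S hh CM Kd)
    (hS : ∀ i, OrphanFree (S i))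
    (hKfree : OrphanFree (policyCS S hh Kd)) :
    OrphanFree (MC S hh Kd) := by
  exact orphanFree_MC S hh CM Kd hwf hK hS hKfree
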